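/- The number of isomorphism classes of Catalan pairs on a set of cardinality n is the n-th Catalan number C_n. -/

import Mathlib

/-- A Catalan pair on a type `X`: `S` and `R` are strict orders, their
symmetrizations are disjoint and cover all pairs of distinct elements,
and `S ∘ R ⊆ R`. -/
def IsCatalanPair {X : Type*} (S R : X → X → Prop) : Prop :=
  (∀ x, ¬ S x x) ∧ (∀ x y z, S x y → S y z → S x z) ∧
  (∀ x, ¬ R x x) ∧ (∀ x y z, R x y → R y z → R x z) ∧
  (∀ x y, x ≠ y → (R x y ∨ R y x) ∨ (S x y ∨ S y x)) ∧
  (∀ x y, (R x y ∨ R y x) → ¬ (S x y ∨ S y x)) ∧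
  (∀ x y z, S x y → R y z → R x z)



/-- Canonical form: a relation on ℕ supported on pairs `x < y < n`, with the
three Catalan-pair conditions relative to the standard order. -/
def NValid (n : ℕ) (S : ℕ → ℕ → Prop) : Prop :=
  (∀ x y, S x y → x < y ∧ y < n) ∧
  (∀ x y z, S x y → S y z → S x z) ∧
  (∀ x y z, x < y → y < z → z < n → ¬ S x y → ¬ S y z → ¬ S x z) ∧
  (∀ x y z, y < z → z < n → S x y → ¬ S y z → ¬ S x z)

abbrev ValidT (n : ℕ) := {S : ℕ → ℕ → Prop // NValid n S}

instance validT_finite (n : ℕ) : Finite (ValidT n) := by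
  apply Finite.of_injective (fun A => fun x y : Fin n => A.1 x y)
  intro A B h
  ext x y
  constructor <;> intro hs
  · have hb := A.2.1 x y hs
    have := congrFun (congrFun h ⟨x, lt_trans hb.1 hb.2⟩) ⟨y, hb.2⟩
    exact this.mp hs
  · have hb := B.2.1 x y hs
    have := congrFun (congrFun h ⟨x, lt_trans hb.1 hb.2⟩) ⟨y, hb.2⟩
    exact this.mpr hs

/-- The root predicate. -/
def IsRoot (S : ℕ → ℕ → Prop) (r : ℕ) : Prop :=
  (∀ x, x < r → S x r) ∧ (∀ y, ¬ S r y)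

theorem root_unique {S : ℕ → ℕ → Prop} {r₁ r₂ : ℕ} (h₁ : IsRoot S r₁) (h₂ : IsRoot S r₂) :
    r₁ = r₂ := by
  rcases lt_trichotomy r₁ r₂ with h | h | h
  · exact absurd (h₂.1 r₁ h) (h₁.2 r₂)
  · exact h
  · exact absurd (h₁.1 r₂ h) (h₂.2 r₁)

open Classical in
theorem root_exists {n : ℕ} {S : ℕ → ℕ → Prop} (h : NValid (n + 1) S) :
    ∃ r, r ≤ n ∧ IsRoot S r := by
  have hne : ∃ x, ∀ y, ¬ S x y := ⟨n, fun y hy => by have := h.1 n y hy; omega⟩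
  classical
  let r := Nat.find hne
  have hr : ∀ y, ¬ S r y := Nat.find_spec hne
  have hrn : r ≤ n := by
    by_contra hc
    exact absurd (fun y hy => by have := h.1 n y hy; omega : ∀ y, ¬ S n y)
      (Nat.find_min hne (by omega : n < r))
  have key : ∀ k x, r - x ≤ k → x < r → S x r := by
    intro k
    induction k with
    | zero => intro x hk hx; omega
    | succ k ih =>
      intro x hk hx
      have hx' : ¬ ∀ y, ¬ S x y := Nat.find_min hne hx
      push_neg at hx'
      obtain ⟨y, hxy⟩ := hx'
      have hxy' := h.1 x y hxy
      rcases lt_trichotomy y r with hy | hy | hy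
      · have hyr : S y r := ih y (by omega) hy
        exact h.2.1 x y r hxy hyr
      · exact hy ▸ hxy
      · by_contra hxr
        exact h.2.2.1 x r y hx hy (h.1 x y hxy).2 hxr (hr y) hxy
  exact ⟨r, hrn, fun x hx => key r x (by omega) hx, hr⟩
def glueRel (i : ℕ) (S₁ S₂ : ℕ → ℕ → Prop) : ℕ → ℕ → Prop :=
  fun x y => (y < i ∧ S₁ x y) ∨ (x < i ∧ y = i) ∨ (i < x ∧ i < y ∧ S₂ (x - i - 1) (y - i - 1))

theorem glue_valid {n i : ℕ} (hi : i ≤ n) {S₁ S₂ : ℕ → ℕ → Prop}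
    (h₁ : NValid i S₁) (h₂ : NValid (n - i) S₂) : NValid (n + 1) (glueRel i S₁ S₂) := by
  obtain ⟨b₁, a₁, t₁, c₁⟩ := h₁
  obtain ⟨b₂, a₂, t₂, c₂⟩ := h₂
  refine ⟨?_, ?_, ?_, ?_⟩
  · rintro x y (⟨hy, hs⟩ | ⟨hx, rfl⟩ | ⟨hx, hy, hs⟩)
    · have := b₁ x y hs; omega
    · omega
    · have := b₂ _ _ hs; omega
  · rintro x y z (⟨hy, hxy⟩ | ⟨hx, he⟩ | ⟨hx, hy, hxy⟩) (⟨hz, hyz⟩ | ⟨hy', he'⟩ | ⟨hy', hz, hyz⟩)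
    · exact Or.inl ⟨hz, a₁ x y z hxy hyz⟩
    · exact Or.inr (Or.inl ⟨by have := b₁ x y hxy; omega, he'⟩)
    · have := b₁ x y hxy; omega
    · have := b₁ y z hyz; omega
    · omega
    · omega
    · have := b₁ y z hyz; omega
    · omega
    · exact Or.inr (Or.inr ⟨hx, hz, a₂ _ _ _ hxy hyz⟩)
  · intro x y z hxy hyz hz hGxy hGyz
    rintro (⟨hzi, hs⟩ | ⟨hxi, he⟩ | ⟨hxi, hzi, hs⟩)
    · refine t₁ x y z hxy hyz hzi ?_ ?_ hs
      · exact fun hs' => hGxy (Or.inl ⟨by omega, hs'⟩)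
      · exact fun hs' => hGyz (Or.inl ⟨hzi, hs'⟩)
    · exact hGyz (Or.inr (Or.inl ⟨by omega, he⟩))
    · refine t₂ (x - i - 1) (y - i - 1) (z - i - 1) (by omega) (by omega) (by omega) ?_ ?_ hs
      · exact fun hs' => hGxy (Or.inr (Or.inr ⟨hxi, by omega, hs'⟩))
      · exact fun hs' => hGyz (Or.inr (Or.inr ⟨by omega, hzi, hs'⟩))
  · intro x y z hyz hz hGxy hGyz
    rcases hGxy with ⟨hyi, hxy⟩ | ⟨hxi, hei⟩ | ⟨hxi, hyi, hxy⟩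
    · rintro (⟨hzi, hs⟩ | ⟨hxi', he'⟩ | ⟨hxi', hzi, hs⟩)
      · refine c₁ x y z hyz hzi hxy ?_ hs
        exact fun hs' => hGyz (Or.inl ⟨hzi, hs'⟩)
      · exact hGyz (Or.inr (Or.inl ⟨hyi, he'⟩))
      · have := b₁ x y hxy; omega
    · rintro (⟨hzi, hs⟩ | ⟨hxi', he'⟩ | ⟨hxi', hzi, hs⟩)
      · omega
      · omega
      · omega
    · rintro (⟨hzi, hs⟩ | ⟨hxi', he'⟩ | ⟨hxi', hzi, hs⟩)
      · omega
      · omega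
      · refine c₂ (x - i - 1) (y - i - 1) (z - i - 1) (by omega) (by omega) hxy ?_ hs
        exact fun hs' => hGyz (Or.inr (Or.inr ⟨hyi, hzi, hs'⟩))

theorem glue_isRoot (i : ℕ) {S₁ S₂ : ℕ → ℕ → Prop} (h₁ : NValid i S₁) :
    IsRoot (glueRel i S₁ S₂) i := by
  constructor
  · intro x hx; exact Or.inr (Or.inl ⟨hx, rfl⟩)
  · rintro y (⟨hy, hs⟩ | ⟨hx, he⟩ | ⟨hx, hy, hs⟩)
    · have := h₁.1 i y hs; omega
    · omega
    · omega

def leftRel (i : ℕ) (S : ℕ → ℕ → Prop) : ℕ → ℕ → Prop := fun x y => y < i ∧ S x y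

def rightRel (i : ℕ) (S : ℕ → ℕ → Prop) : ℕ → ℕ → Prop :=
  fun a b => S (a + i + 1) (b + i + 1)

theorem left_valid {n i : ℕ} (hi : i ≤ n) {S : ℕ → ℕ → Prop} (h : NValid (n + 1) S) :
    NValid i (leftRel i S) := by
  obtain ⟨b, a, t, c⟩ := h
  refine ⟨?_, ?_, ?_, ?_⟩
  · rintro x y ⟨hy, hs⟩; exact ⟨(b x y hs).1, hy⟩
  · rintro x y z ⟨hy, hxy⟩ ⟨hz, hyz⟩; exact ⟨hz, a x y z hxy hyz⟩
  · intro x y z hxy hyz hz hSxy hSyz hs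
    exact t x y z hxy hyz (by omega) (fun hs' => hSxy ⟨by omega, hs'⟩)
      (fun hs' => hSyz ⟨hz, hs'⟩) hs.2
  · rintro x y z hyz hz ⟨hy, hxy⟩ hSyz hs
    exact c x y z hyz (by omega) hxy (fun hs' => hSyz ⟨hz, hs'⟩) hs.2

theorem right_valid {n i : ℕ} (hi : i ≤ n) {S : ℕ → ℕ → Prop} (h : NValid (n + 1) S) :
    NValid (n - i) (rightRel i S) := by
  obtain ⟨b, a, t, c⟩ := h
  refine ⟨?_, ?_, ?_, ?_⟩
  · intro x y hs; have := b _ _ hs; unfold rightRel at hs; constructor <;> omega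
  · intro x y z hxy hyz; exact a _ _ _ hxy hyz
  · intro x y z hxy hyz hz hSxy hSyz
    exact t (x + i + 1) (y + i + 1) (z + i + 1) (by omega) (by omega) (by omega) hSxy hSyz
  · intro x y z hyz hz hxy hSyz
    exact c (x + i + 1) (y + i + 1) (z + i + 1) (by omega) (by omega) hxy hSyz

theorem left_glue (i : ℕ) {S₁ S₂ : ℕ → ℕ → Prop} (h₁ : NValid i S₁) :
    leftRel i (glueRel i S₁ S₂) = S₁ := by
  ext x y
  constructor
  · rintro ⟨hy, ⟨_, hs⟩ | ⟨_, he⟩ | ⟨hx, hy', _⟩⟩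
    · exact hs
    · omega
    · omega
  · intro hs
    exact ⟨(h₁.1 x y hs).2, Or.inl ⟨(h₁.1 x y hs).2, hs⟩⟩

theorem right_glue (i : ℕ) {S₁ S₂ : ℕ → ℕ → Prop} (h₁ : NValid i S₁) :
    rightRel i (glueRel i S₁ S₂) = S₂ := by
  ext x y
  constructor
  · rintro (⟨hy, hs⟩ | ⟨hx, he⟩ | ⟨hx, hy, hs⟩)
    · have := h₁.1 _ _ hs; omega
    · omega
    · have hx' : x + i + 1 - i - 1 = x := by omega
      have hy' : y + i + 1 - i - 1 = y := by omega
      rwa [hx', hy'] at hs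
  · intro hs
    refine Or.inr (Or.inr ⟨by omega, by omega, ?_⟩)
    have hx' : x + i + 1 - i - 1 = x := by omega
    have hy' : y + i + 1 - i - 1 = y := by omega
    rwa [hx', hy']

theorem glue_left_right {n r : ℕ} {S : ℕ → ℕ → Prop} (h : NValid (n + 1) S)
    (hr : IsRoot S r) : glueRel r (leftRel r S) (rightRel r S) = S := by
  ext x y
  constructor
  · rintro (⟨hy, hy', hs⟩ | ⟨hx, he⟩ | ⟨hx, hy, hs⟩)
    · exact hs
    · exact he ▸ hr.1 x hx
    · have hx' : x - r - 1 + r + 1 = x := by omega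
      have hy' : y - r - 1 + r + 1 = y := by omega
      unfold rightRel at hs
      rwa [hx', hy'] at hs
  · intro hs
    have hb := h.1 x y hs
    rcases lt_trichotomy y r with hy | rfl | hy
    · exact Or.inl ⟨hy, hy, hs⟩
    · exact Or.inr (Or.inl ⟨hb.1, rfl⟩)
    · rcases lt_trichotomy x r with hx | rfl | hx
      · exact absurd hs (h.2.2.2 x r y hy hb.2 (hr.1 x hx) (hr.2 y))
      · exact absurd hs (hr.2 y)
      · refine Or.inr (Or.inr ⟨hx, hy, ?_⟩)
        have hx' : x - r - 1 + r + 1 = x := by omega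
        have hy' : y - r - 1 + r + 1 = y := by omega
        unfold rightRel
        rwa [hx', hy']
def glueMap (n : ℕ) : (Σ i : Fin (n + 1), ValidT i × ValidT (n - i)) → ValidT (n + 1) :=
  fun x => ⟨glueRel x.1 x.2.1.1 x.2.2.1,
    glue_valid (by omega) x.2.1.2 x.2.2.2⟩

theorem glueMap_bijective (n : ℕ) : Function.Bijective (glueMap n) := by
  constructor
  · rintro ⟨⟨i, hi⟩, A, B⟩ ⟨⟨j, hj⟩, C, D⟩ h
    have hg : glueRel i A.1 B.1 = glueRel j C.1 D.1 := congrArg Subtype.val h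
    have hij : i = j :=
      root_unique (glue_isRoot i A.2) (hg ▸ glue_isRoot j C.2)
    subst hij
    have hAC : A = C := by
      apply Subtype.ext
      rw [← left_glue i A.2 (S₂ := B.1), hg, left_glue i C.2]
    have hBD : B = D := by
      apply Subtype.ext
      rw [← right_glue i A.2 (S₂ := B.1), hg, right_glue i C.2]
    simp [hAC, hBD]
  · rintro ⟨S, hS⟩
    obtain ⟨r, hr, hroot⟩ := root_exists hS
    refine ⟨⟨⟨r, by omega⟩, ⟨leftRel r S, left_valid hr hS⟩, ⟨rightRel r S, right_valid hr hS⟩⟩, ?_⟩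
    exact Subtype.ext (glue_left_right hS hroot)

theorem card_validT : ∀ n, Nat.card (ValidT n) = catalan n := by
  intro n
  induction n using Nat.strong_induction_on with
  | _ n ih =>
    match n with
    | 0 =>
      rw [catalan_zero]
      rw [Nat.card_eq_one_iff_unique]
      constructor
      · constructor
        intro A B
        apply Subtype.ext
        ext x y
        constructor
        · intro h; have := A.2.1 x y h; omega
        · intro h; have := B.2.1 x y h; omega
      · exact ⟨⟨fun _ _ => False, ⟨fun _ _ h => h.elim, fun _ _ _ h => h.elim,
          fun _ _ _ _ _ _ _ _ h => h, fun _ _ _ _ _ h => h.elim⟩⟩⟩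
    | (m + 1) =>
      rw [← Nat.card_eq_of_bijective _ (glueMap_bijective m), catalan_succ]
      letI : ∀ i : Fin (m + 1), Fintype (ValidT (i : ℕ) × ValidT (m - (i : ℕ))) :=
        fun i => Fintype.ofFinite _
      rw [Nat.card_eq_fintype_card, Fintype.card_sigma]
      refine Finset.sum_congr rfl fun i _ => ?_
      rw [← Nat.card_eq_fintype_card, Nat.card_prod, ih i (by omega), ih (m - (i : ℕ)) (by omega)]
theorem strictMono_equiv_fix {n : ℕ} (ξ : Fin n ≃ Fin n) (hmono : StrictMono (ξ : Fin n → Fin n))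
    (x : Fin n) : ξ x = x := by
  have key : ∀ (f : Fin n ≃ Fin n), StrictMono (f : Fin n → Fin n) →
      ∀ k (hk : k < n), k ≤ (f ⟨k, hk⟩ : Fin n).1 := by
    intro f hf k
    induction k with
    | zero => omega
    | succ k ih =>
      intro hk
      have hk' : k < n := by omega
      have h1 := ih hk'
      have h2 : f ⟨k, hk'⟩ < f ⟨k + 1, hk⟩ := hf (by simp [Fin.lt_def])
      have := Fin.lt_def.mp h2
      omega
  have hsymm : StrictMono (ξ.symm : Fin n → Fin n) := by
    intro a b hab
    rcases lt_trichotomy (ξ.symm a) (ξ.symm b) with h | h | h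
    · exact h
    · have : a = b := by
        have := congrArg ξ h
        simpa using this
      exact absurd this (ne_of_lt hab)
    · have := hmono h
      rw [Equiv.apply_symm_apply, Equiv.apply_symm_apply] at this
      exact absurd hab (not_lt.mpr this.le)
  have h1 : (x : ℕ) ≤ (ξ x : ℕ) := by
    have := key ξ hmono x.1 x.isLt
    simpa using this
  have h2 : ((ξ x : Fin n) : ℕ) ≤ (x : ℕ) := by
    have := key ξ.symm hsymm (ξ x).1 (ξ x).isLt
    simp at this
    simpa using this
  exact Fin.ext (le_antisymm h2 h1)

lemma exists_sorting {n : ℕ} {α : Type} [Fintype α] (T : α → α → Prop)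
    (hSTO : IsStrictTotalOrder α T) (hn : Fintype.card α = n) :
    ∃ e : Fin n ≃ α, ∀ x y : Fin n, x < y ↔ T (e x) (e y) := by
  haveI := hSTO
  letI : DecidableRel T := fun a b => Classical.dec _
  letI L : LinearOrder α := linearOrderOfSTO T
  let e := monoEquivOfFin α hn
  refine ⟨e.toEquiv, fun x y => ?_⟩
  constructor
  · intro h
    exact e.lt_iff_lt.mpr h
  · intro h
    exact e.lt_iff_lt.mp h

abbrev CPT (n : ℕ) :=
  {p : (Fin n → Fin n → Prop) × (Fin n → Fin n → Prop) // IsCatalanPair p.1 p.2}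

def crel (n : ℕ) : CPT n → CPT n → Prop := fun p q =>
  ∃ ξ : Fin n ≃ Fin n, ∀ x y : Fin n,
    (p.1.1 x y ↔ q.1.1 (ξ x) (ξ y)) ∧ (p.1.2 x y ↔ q.1.2 (ξ x) (ξ y))

theorem crel_equivalence (n : ℕ) : Equivalence (crel n) where
  refl p := ⟨Equiv.refl _, fun _ _ => ⟨Iff.rfl, Iff.rfl⟩⟩
  symm {p q} := fun ⟨ξ, h⟩ => ⟨ξ.symm, fun x y => by
    have h' := h (ξ.symm x) (ξ.symm y)
    simp only [Equiv.apply_symm_apply] at h'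
    exact ⟨h'.1.symm, h'.2.symm⟩⟩
  trans {p q r} := fun ⟨ξ₁, h₁⟩ ⟨ξ₂, h₂⟩ => ⟨ξ₁.trans ξ₂, fun x y =>
    ⟨(h₁ x y).1.trans (h₂ (ξ₁ x) (ξ₁ y)).1, (h₁ x y).2.trans (h₂ (ξ₁ x) (ξ₁ y)).2⟩⟩

def Phi (n : ℕ) (A : ValidT n) : CPT n :=
  ⟨(fun x y => A.1 x y, fun x y => (x : ℕ) < y ∧ ¬ A.1 x y), by
    obtain ⟨S, b, a, t, c⟩ := A
    refine ⟨?_, ?_, ?_, ?_, ?_, ?_, ?_⟩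
    · intro x h; have := b _ _ h; omega
    · intro x y z h1 h2; exact a _ _ _ h1 h2
    · intro x h; omega
    · rintro x y z ⟨h1, h2⟩ ⟨h3, h4⟩
      exact ⟨by omega, t _ _ _ h1 h3 z.isLt h2 h4⟩
    · intro x y hne
      have hne' : (x : ℕ) ≠ y := fun h => hne (Fin.ext h)
      rcases Nat.lt_trichotomy (x : ℕ) (y : ℕ) with h | h | h
      · by_cases hs : S x y
        · exact Or.inr (Or.inl hs)
        · exact Or.inl (Or.inl ⟨h, hs⟩)
      · exact absurd h hne'
      · by_cases hs : S y x
        · exact Or.inr (Or.inr hs)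
        · exact Or.inl (Or.inr ⟨h, hs⟩)
    · rintro x y (⟨h1, h2⟩ | ⟨h1, h2⟩) (h | h)
      · exact h2 h
      · have := b _ _ h; omega
      · have := b _ _ h; omega
      · exact h2 h
    · rintro x y z h1 ⟨h2, h3⟩
      have hb := b _ _ h1
      exact ⟨by omega, c _ _ _ h2 z.isLt h1 h3⟩⟩

theorem phi_quot_bijective (n : ℕ) :
    Function.Bijective (fun A : ValidT n => Quot.mk (crel n) (Phi n A)) := by
  constructor
  · intro A B h
    have h' : crel n (Phi n A) (Phi n B) :=
      ((crel_equivalence n).eqvGen_iff).mp (Quot.eq.mp h)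
    obtain ⟨ξ, hξ⟩ := h'
    have hmono : StrictMono ξ := by
      intro x y hxy
      by_cases hs : A.1 (x : ℕ) (y : ℕ)
      · have := B.2.1 _ _ ((hξ x y).1.mp hs)
        exact Fin.lt_def.mpr this.1
      · have := (hξ x y).2.mp ⟨Fin.lt_def.mp hxy, hs⟩
        exact Fin.lt_def.mpr this.1
    have hid' : ∀ x : Fin n, ξ x = x := strictMono_equiv_fix ξ hmono
    apply Subtype.ext
    ext a b
    constructor
    · intro hs
      have hb := A.2.1 a b hs
      have := (hξ ⟨a, by omega⟩ ⟨b, hb.2⟩).1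
      rw [hid' ⟨a, by omega⟩, hid' ⟨b, hb.2⟩] at this
      exact this.mp hs
    · intro hs
      have hb := B.2.1 a b hs
      have := (hξ ⟨a, by omega⟩ ⟨b, hb.2⟩).1
      rw [hid' ⟨a, by omega⟩, hid' ⟨b, hb.2⟩] at this
      exact this.mpr hs
  · intro q
    induction q using Quot.ind with
    | _ p =>
    rcases p with ⟨⟨S, R⟩, hp⟩
    obtain ⟨hSi, hSt, hRi, hRt, htot, hdisj, hSR⟩ := hp
    set T : Fin n → Fin n → Prop := fun x y => S x y ∨ R x y with hT
    have Ttrans : ∀ x y z : Fin n, T x y → T y z → T x z := by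
      rintro x y z (h1 | h1) (h2 | h2)
      · exact Or.inl (hSt _ _ _ h1 h2)
      · exact Or.inr (hSR _ _ _ h1 h2)
      · -- R x y, S y z
        by_cases hxz : x = z
        · subst hxz
          exact absurd (Or.inl h1) (fun hh => hdisj x y hh (Or.inr h2))
        · rcases htot x z hxz with (h | h) | (h | h)
          · exact Or.inr h
          · -- R z x
            have : R z y := hRt _ _ _ h h1
            exact absurd (Or.inl this) (fun hh => hdisj z y hh (Or.inr h2))
          · exact Or.inl h
          · -- S z x
            have : R z y := hSR _ _ _ h h1
            exact absurd (Or.inl this) (fun hh => hdisj z y hh (Or.inr h2))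
      · exact Or.inr (hRt _ _ _ h1 h2)
    have Tirr : ∀ x : Fin n, ¬ T x x := by
      rintro x (h | h)
      · exact hSi x h
      · exact hRi x h
    haveI hSTO : IsStrictTotalOrder (Fin n) T :=
      { trichotomous := by
          intro x y hn1 hn2
          by_cases hxy : x = y
          · exact hxy
          · rcases htot x y hxy with (h | h) | (h | h)
            · exact absurd (Or.inr h) hn1
            · exact absurd (Or.inr h) hn2
            · exact absurd (Or.inl h) hn1
            · exact absurd (Or.inl h) hn2
        irrefl := Tirr
        trans := Ttrans }
    obtain ⟨e, hlt0⟩ := exists_sorting (n := n) T hSTO (Fintype.card_fin n)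
    have hlt : ∀ x y : Fin n, (x : ℕ) < (y : ℕ) ↔ T (e x) (e y) := by
      intro x y
      rw [← Fin.lt_def]
      exact hlt0 x y
    set SN : ℕ → ℕ → Prop := fun a b =>
      ∃ (ha : a < n) (hb : b < n), a < b ∧ S (e ⟨a, ha⟩) (e ⟨b, hb⟩) with hSN
    have hvalid : NValid n SN := by
      refine ⟨?_, ?_, ?_, ?_⟩
      · rintro x y ⟨hx, hy, h, _⟩; exact ⟨h, hy⟩
      · rintro x y z ⟨hx, hy, h1, hs1⟩ ⟨hy', hz, h2, hs2⟩
        exact ⟨hx, hz, h1.trans h2, hSt _ _ _ hs1 hs2⟩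
      · intro x y z h1 h2 h3 hn1 hn2
        rintro ⟨hx, hz, _, hs⟩
        have hy : y < n := h2.trans h3
        have hR1 : R (e ⟨x, hx⟩) (e ⟨y, hy⟩) := by
          rcases (hlt ⟨x, hx⟩ ⟨y, hy⟩).mp h1 with h | h
          · exact absurd ⟨hx, hy, h1, h⟩ hn1
          · exact h
        have hR2 : R (e ⟨y, hy⟩) (e ⟨z, hz⟩) := by
          rcases (hlt ⟨y, hy⟩ ⟨z, hz⟩).mp h2 with h | h
          · exact absurd ⟨hy, hz, h2, h⟩ hn2
          · exact h
        exact hdisj _ _ (Or.inl (hRt _ _ _ hR1 hR2)) (Or.inl hs)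
      · intro x y z hyz hz hs1 hn
        rintro ⟨hx, hz', _, hs⟩
        obtain ⟨hx', hy, hxy, hS1⟩ := hs1
        have hR2 : R (e ⟨y, hy⟩) (e ⟨z, hz'⟩) := by
          rcases (hlt ⟨y, hy⟩ ⟨z, hz'⟩).mp hyz with h | h
          · exact absurd ⟨hy, hz', hyz, h⟩ hn
          · exact h
        exact hdisj _ _ (Or.inl (hSR _ _ _ hS1 hR2)) (Or.inl hs)
    refine ⟨⟨SN, hvalid⟩, ?_⟩
    apply Quot.sound
    refine ⟨e, ?_⟩
    intro x y
    have heta : ∀ (x : Fin n) (h : (x : ℕ) < n), (⟨(x : ℕ), h⟩ : Fin n) = x :=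
      fun x h => Fin.eta x h
    constructor
    · show SN x y ↔ S (e x) (e y)
      constructor
      · rintro ⟨hx, hy, h, hs⟩
        rwa [heta, heta] at hs
      · intro hs
        have := (hlt x y).mpr (Or.inl hs)
        exact ⟨x.isLt, y.isLt, this, by rwa [heta, heta]⟩
    · show ((x : ℕ) < y ∧ ¬ SN x y) ↔ R (e x) (e y)
      constructor
      · rintro ⟨h, hn⟩
        rcases (hlt x y).mp h with hs | hr
        · exact absurd ⟨x.isLt, y.isLt, h, by rwa [heta, heta]⟩ hn
        · exact hr
      · intro hr
        have h := (hlt x y).mpr (Or.inr hr)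
        refine ⟨h, ?_⟩
        rintro ⟨hx, hy, _, hs⟩
        rw [heta, heta] at hs
        exact hdisj _ _ (Or.inl hr) (Or.inl hs)

theorem card_catalan_pairs (n : ℕ) :
    Nat.card (Quot (fun (p q : {p : (Fin n → Fin n → Prop) × (Fin n → Fin n → Prop) //
        IsCatalanPair p.1 p.2}) =>
      ∃ ξ : Fin n ≃ Fin n, ∀ x y : Fin n,
        (p.1.1 x y ↔ q.1.1 (ξ x) (ξ y)) ∧ (p.1.2 x y ↔ q.1.2 (ξ x) (ξ y)))) =
    catalan n := by
  rw [← card_validT n]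
  exact (Nat.card_eq_of_bijective _ (phi_quot_bijective n)).symm
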